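/- arXiv:2404.17947 — 2 statements merged into one kernel-verified Lean document; each statement's English description precedes it below -/
import Mathlib

section
/- Consider an L-layer GCN as below, where Ã ∈ ℝ^{n×n} has nonnegative entries, let X ∈ ℝ^{n×K}, σ > 0, ε ≥ 0, and let μ be a probability measure on ℝ^{n×K} whose support is contained in {X' : ‖X_v − X'_v‖_∞ ≤ ε for every row v}. Then μ({X' : max_u ‖F_Ã(X')_u − F_Ã(X)_u‖_∞ > σ}) ≤ (∏_{ℓ=1}^{L} ‖W^{(ℓ)}‖_∞) · ε · ŵ_G / σ, where ŵ_G = max_u ŵ_u. -/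
open MeasureTheory
open scoped BigOperators ENNReal NNReal

/-- An `L`-layer GCN: `H⁽⁰⁾ = X` and `H⁽ˡ⁺¹⁾ = φ⁽ˡ⁺¹⁾(Ã H⁽ˡ⁾ W⁽ˡ⁺¹⁾)`, with the
activation applied entrywise. -/
noncomputable def gcn {n : ℕ} (d : ℕ → ℕ) (φ : ℕ → ℝ → ℝ)
    (A : Matrix (Fin n) (Fin n) ℝ)
    (W : (ℓ : ℕ) → Matrix (Fin (d ℓ)) (Fin (d (ℓ + 1))) ℝ)
    (X : Matrix (Fin n) (Fin (d 0)) ℝ) : (ℓ : ℕ) → Matrix (Fin n) (Fin (d ℓ)) ℝ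
  | 0 => X
  | (ℓ + 1) => (A * gcn d φ A W X ℓ * W ℓ).map (φ (ℓ + 1))

/-- The operator norm of the map `h ↦ hW` on row vectors with respect to the `ℓ∞`
norm: the maximum absolute column sum of `W`. -/
noncomputable def opNormInf {m e : ℕ} (W : Matrix (Fin m) (Fin e) ℝ) : ℝ :=
  ⨆ j : Fin e, ∑ i : Fin m, |W i j|

instance matrixMeasurableSpace {a b : ℕ} : MeasurableSpace (Matrix (Fin a) (Fin b) ℝ) :=
  (inferInstance : MeasurableSpace (Fin a → Fin b → ℝ))

lemma opNormInf_nonneg {m e : ℕ} (W : Matrix (Fin m) (Fin e) ℝ) : 0 ≤ opNormInf W :=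
  Real.iSup_nonneg fun _ => Finset.sum_nonneg fun _ _ => abs_nonneg _

lemma colsum_le_opNormInf {m e : ℕ} (W : Matrix (Fin m) (Fin e) ℝ) (j : Fin e) :
    ∑ i : Fin m, |W i j| ≤ opNormInf W :=
  le_ciSup (Set.Finite.bddAbove (Set.finite_range fun j => ∑ i : Fin m, |W i j|)) j

lemma step_bound {n m e : ℕ} (A : Matrix (Fin n) (Fin n) ℝ) (hA : ∀ i j, 0 ≤ A i j)
    (Wl : Matrix (Fin m) (Fin e) ℝ) (f : ℝ → ℝ) (hf : LipschitzWith 1 f)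
    (M M' : Matrix (Fin n) (Fin m) ℝ) (E : Fin n → ℝ)
    (hEnn : ∀ v, 0 ≤ E v) (hE : ∀ v, ‖M' v - M v‖ ≤ E v) (u : Fin n) :
    ‖((A * M' * Wl).map f) u - ((A * M * Wl).map f) u‖ ≤
      opNormInf Wl * ∑ v : Fin n, A u v * E v := by
  have hrhs : 0 ≤ opNormInf Wl * ∑ v : Fin n, A u v * E v :=
    mul_nonneg (opNormInf_nonneg _)
      (Finset.sum_nonneg fun v _ => mul_nonneg (hA u v) (hEnn v))
  rw [pi_norm_le_iff_of_nonneg hrhs]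
  intro j
  have hlip : ∀ x y : ℝ, |f x - f y| ≤ |x - y| := by
    intro x y
    have := hf.dist_le_mul x y
    simpa [Real.dist_eq] using this
  simp only [Pi.sub_apply, Matrix.map_apply]
  refine (hlip _ _).trans ?_
  have hdiff : (A * M' * Wl) u j - (A * M * Wl) u j =
      ∑ i : Fin m, (∑ v : Fin n, A u v * (M' v i - M v i)) * Wl i j := by
    simp only [Matrix.mul_apply, ← Finset.sum_sub_distrib, ← sub_mul, mul_sub]
  rw [hdiff]
  refine (Finset.abs_sum_le_sum_abs _ _).trans ?_
  have hterm : ∀ i ∈ Finset.univ, |(∑ v : Fin n, A u v * (M' v i - M v i)) * Wl i j| ≤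
      (∑ v : Fin n, A u v * E v) * |Wl i j| := by
    intro i _
    rw [abs_mul]
    refine mul_le_mul_of_nonneg_right ?_ (abs_nonneg _)
    refine (Finset.abs_sum_le_sum_abs _ _).trans (Finset.sum_le_sum fun v _ => ?_)
    rw [abs_mul, abs_of_nonneg (hA u v)]
    refine mul_le_mul_of_nonneg_left ?_ (hA u v)
    calc |M' v i - M v i| = ‖(M' v - M v) i‖ := by simp
      _ ≤ ‖M' v - M v‖ := norm_le_pi_norm _ i
      _ ≤ E v := hE v
  refine (Finset.sum_le_sum hterm).trans ?_
  rw [← Finset.mul_sum, mul_comm]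
  exact mul_le_mul_of_nonneg_right (colsum_le_opNormInf Wl j)
    (Finset.sum_nonneg fun v _ => mul_nonneg (hA u v) (hEnn v))

lemma pow_entry_nonneg {n : ℕ} (A : Matrix (Fin n) (Fin n) ℝ) (hA : ∀ i j, 0 ≤ A i j) :
    ∀ L i j, 0 ≤ (A ^ L) i j := by
  intro L
  induction L with
  | zero => intro i j; simp [Matrix.one_apply]; positivity
  | succ L ih =>
    intro i j
    rw [pow_succ', Matrix.mul_apply]
    exact Finset.sum_nonneg fun v _ => mul_nonneg (hA i v) (ih v j)

lemma key_bound {n : ℕ} (d : ℕ → ℕ) (φ : ℕ → ℝ → ℝ)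
    (A : Matrix (Fin n) (Fin n) ℝ) (hA : ∀ i j, 0 ≤ A i j)
    (W : (ℓ : ℕ) → Matrix (Fin (d ℓ)) (Fin (d (ℓ + 1))) ℝ)
    (hφ : ∀ ℓ, LipschitzWith 1 (φ ℓ))
    (X X' : Matrix (Fin n) (Fin (d 0)) ℝ) (ε : ℝ) (hε : 0 ≤ ε)
    (h0 : ∀ v, ‖X' v - X v‖ ≤ ε) :
    ∀ L u, ‖gcn d φ A W X' L u - gcn d φ A W X L u‖ ≤
      (∏ ℓ ∈ Finset.range L, opNormInf (W ℓ)) * ε * ∑ v : Fin n, (A ^ L) u v := by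
  intro L
  induction L with
  | zero =>
    intro u
    simpa [gcn, Matrix.one_apply] using h0 u
  | succ L ih =>
    intro u
    have hprod : 0 ≤ ∏ ℓ ∈ Finset.range L, opNormInf (W ℓ) :=
      Finset.prod_nonneg fun ℓ _ => opNormInf_nonneg _
    have hEnn : ∀ v : Fin n,
        0 ≤ (∏ ℓ ∈ Finset.range L, opNormInf (W ℓ)) * ε * ∑ w : Fin n, (A ^ L) v w :=
      fun v => mul_nonneg (mul_nonneg hprod hε)
        (Finset.sum_nonneg fun w _ => pow_entry_nonneg A hA L v w)
    have := step_bound A hA (W L) (φ (L + 1)) (hφ (L + 1))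
      (gcn d φ A W X L) (gcn d φ A W X' L)
      (fun v => (∏ ℓ ∈ Finset.range L, opNormInf (W ℓ)) * ε * ∑ w : Fin n, (A ^ L) v w)
      hEnn ih u
    refine le_trans (by exact this) (le_of_eq ?_)
    rw [Finset.prod_range_succ, pow_succ']
    simp only [Matrix.mul_apply, Finset.mul_sum, Finset.sum_mul]
    rw [Finset.sum_comm]
    exact Finset.sum_congr rfl fun v _ => Finset.sum_congr rfl fun w _ => by ring

/-- Theorem 1 (probabilistic / expected-robustness form): if the law `μ` of the perturbed
feature matrix is supported in the set of matrices whose rows deviate from those of `X`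
by at most `ε` in `ℓ∞` norm, then the probability that the output of an `L`-layer GCN
moves by more than `σ` (in the max-over-nodes `ℓ∞` sense) is at most
`(∏ ℓ, ‖W⁽ˡ⁾‖_∞) · ε · ŵ_G / σ`, where `ŵ_G = max_u ∑ v, (Ã^L)_{u v}`. -/
theorem gcn_expected_robustness_feature_attack
    {n : ℕ} (L : ℕ) (d : ℕ → ℕ) (φ : ℕ → ℝ → ℝ)
    (A : Matrix (Fin n) (Fin n) ℝ) (hA : ∀ i j, 0 ≤ A i j)
    (W : (ℓ : ℕ) → Matrix (Fin (d ℓ)) (Fin (d (ℓ + 1))) ℝ)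
    (hφ : ∀ ℓ, LipschitzWith 1 (φ ℓ))
    (X : Matrix (Fin n) (Fin (d 0)) ℝ) (ε : ℝ) (hε : 0 ≤ ε) (σ : ℝ) (hσ : 0 < σ)
    (μ : Measure (Matrix (Fin n) (Fin (d 0)) ℝ)) [IsProbabilityMeasure μ]
    (hsupp : ∀ᵐ X' ∂μ, ∀ v : Fin n, ‖X v - X' v‖ ≤ ε) :
    μ {X' | σ < ⨆ u : Fin n, ‖gcn d φ A W X' L u - gcn d φ A W X L u‖} ≤
      ENNReal.ofReal
        ((∏ ℓ ∈ Finset.range L, opNormInf (W ℓ)) * ε *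
          (⨆ u : Fin n, ∑ v : Fin n, (A ^ L) u v) / σ) := by
  set B : ℝ := (∏ ℓ ∈ Finset.range L, opNormInf (W ℓ)) * ε *
      (⨆ u : Fin n, ∑ v : Fin n, (A ^ L) u v) with hB
  have hprod : 0 ≤ ∏ ℓ ∈ Finset.range L, opNormInf (W ℓ) :=
    Finset.prod_nonneg fun ℓ _ => opNormInf_nonneg _
  have hdet : ∀ X' : Matrix (Fin n) (Fin (d 0)) ℝ, (∀ v, ‖X v - X' v‖ ≤ ε) →
      (⨆ u : Fin n, ‖gcn d φ A W X' L u - gcn d φ A W X L u‖) ≤ B := by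
    intro X' hX'
    rcases isEmpty_or_nonempty (Fin n) with h | h
    · simp [hB, iSup_of_empty', Real.sSup_empty]
    · refine ciSup_le fun u => ?_
      have h0 : ∀ v, ‖X' v - X v‖ ≤ ε := fun v => by
        rw [norm_sub_rev]; exact hX' v
      refine (key_bound d φ A hA W hφ X X' ε hε h0 L u).trans ?_
      exact mul_le_mul_of_nonneg_left
        (le_ciSup (Set.Finite.bddAbove
          (Set.finite_range fun u => ∑ v : Fin n, (A ^ L) u v)) u)
        (mul_nonneg hprod hε)
  by_cases hcase : B ≤ σ
  · have hnull : μ {X' | σ < ⨆ u : Fin n,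
        ‖gcn d φ A W X' L u - gcn d φ A W X L u‖} = 0 := by
      refine measure_mono_null (fun X' hX' => ?_) (ae_iff.mp hsupp)
      intro hP
      exact absurd ((hdet X' hP).trans hcase) (not_le.mpr hX')
    rw [hnull]
    exact zero_le
  · calc μ {X' | σ < ⨆ u : Fin n, ‖gcn d φ A W X' L u - gcn d φ A W X L u‖}
        ≤ 1 := prob_le_one
      _ ≤ ENNReal.ofReal (B / σ) := by
          rw [← ENNReal.ofReal_one]
          exact ENNReal.ofReal_le_ofReal
            (le_of_lt ((one_lt_div hσ).mpr (not_le.mp hcase)))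
end

section
/- Consider an L-layer GCN as below, with each activation additionally satisfying φ^{(ℓ)}(0) = 0 and with every weight matrix satisfying ‖W^{(ℓ)}‖₂ ≥ 1. Let Ã ∈ ℝ^{n×n} with ‖Ã‖₂ ≤ 1, let X ∈ ℝ^{n×K}, σ > 0, ε ≥ 0, and let μ be a probability measure on ℝ^{n×n} whose support is contained in {Ã' : ‖Ã'‖₂ ≤ 1 and ‖Ã − Ã'‖₂ ≤ ε}. Then μ({Ã' : ‖F_{Ã'}(X) − F_Ã(X)‖_F > σ}) ≤ (∏_{ℓ=1}^{L} ‖W^{(ℓ)}‖₂) · ‖X‖_F · ε · (1 + L · ∏_{ℓ=1}^{L} ‖W^{(ℓ)}‖₂) / σ. -/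
open MeasureTheory
open scoped BigOperators ENNReal NNReal

/-- The Frobenius norm of a real matrix. -/
noncomputable def frob {n m : ℕ} (M : Matrix (Fin n) (Fin m) ℝ) : ℝ :=
  Real.sqrt (∑ i : Fin n, ∑ j : Fin m, (M i j) ^ 2)

/-- The spectral norm (operator norm induced by the Euclidean vector norm) of a real
matrix. -/
noncomputable def spec {n m : ℕ} (M : Matrix (Fin n) (Fin m) ℝ) : ℝ :=
  ‖LinearMap.toContinuousLinearMap (Matrix.toEuclideanLin M)‖

open scoped Matrix.Norms.L2Operator
open scoped Matrix

lemma spec_eq {n m : ℕ} (M : Matrix (Fin n) (Fin m) ℝ) : spec M = ‖M‖ := rfl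

lemma frob_eq_norm {n m : ℕ} (M : Matrix (Fin n) (Fin m) ℝ) :
    frob M = ‖(EuclideanSpace.equiv (Fin n × Fin m) ℝ).symm (fun p => M p.1 p.2)‖ := by
  rw [EuclideanSpace.norm_eq]
  simp [frob, Fintype.sum_prod_type, Real.norm_eq_abs, sq_abs]

lemma frob_nonneg {n m : ℕ} (M : Matrix (Fin n) (Fin m) ℝ) : 0 ≤ frob M := Real.sqrt_nonneg _

lemma spec_nonneg {n m : ℕ} (M : Matrix (Fin n) (Fin m) ℝ) : 0 ≤ spec M := by
  rw [spec_eq]; exact norm_nonneg _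

lemma frob_add_le {n m : ℕ} (M N : Matrix (Fin n) (Fin m) ℝ) :
    frob (M + N) ≤ frob M + frob N := by
  simp only [frob_eq_norm]
  have : ((EuclideanSpace.equiv (Fin n × Fin m) ℝ).symm (fun p => (M + N) p.1 p.2)) =
      ((EuclideanSpace.equiv (Fin n × Fin m) ℝ).symm (fun p => M p.1 p.2)) +
      ((EuclideanSpace.equiv (Fin n × Fin m) ℝ).symm (fun p => N p.1 p.2)) := rfl
  rw [this]; exact norm_add_le _ _

lemma spec_sub_comm {a : ℕ} (M N : Matrix (Fin a) (Fin a) ℝ) : spec (M - N) = spec (N - M) := by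
  simp only [spec_eq]
  rw [← neg_sub N M, norm_neg]

lemma frob_transpose {n m : ℕ} (M : Matrix (Fin n) (Fin m) ℝ) : frob Mᵀ = frob M := by
  unfold frob
  rw [Finset.sum_comm]
  rfl

lemma spec_transpose {n m : ℕ} (M : Matrix (Fin n) (Fin m) ℝ) : spec Mᵀ = spec M := by
  simp only [spec_eq]
  rw [← Matrix.l2_opNorm_conjTranspose M]
  congr 1

lemma sum_sq_mulVec_le {a b : ℕ} (M : Matrix (Fin a) (Fin b) ℝ) (v : Fin b → ℝ) :
    ∑ i, (M.mulVec v i) ^ 2 ≤ spec M ^ 2 * ∑ j, (v j) ^ 2 := by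
  have h := M.l2_opNorm_mulVec ((EuclideanSpace.equiv (Fin b) ℝ).symm v)
  have h1 : ‖(EuclideanSpace.equiv (Fin a) ℝ).symm (M.mulVec v)‖ ^ 2 = ∑ i, (M.mulVec v i) ^ 2 := by
    rw [EuclideanSpace.norm_eq, Real.sq_sqrt (by positivity)]
    simp [Real.norm_eq_abs, sq_abs]
  have h2 : ‖(EuclideanSpace.equiv (Fin b) ℝ).symm v‖ ^ 2 = ∑ j, (v j) ^ 2 := by
    rw [EuclideanSpace.norm_eq, Real.sq_sqrt (by positivity)]
    simp [Real.norm_eq_abs, sq_abs]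
  calc ∑ i, (M.mulVec v i) ^ 2 = ‖(EuclideanSpace.equiv (Fin a) ℝ).symm (M.mulVec v)‖ ^ 2 := h1.symm
    _ ≤ (‖M‖ * ‖(EuclideanSpace.equiv (Fin b) ℝ).symm v‖) ^ 2 := by
        apply pow_le_pow_left₀ (norm_nonneg _) h
    _ = spec M ^ 2 * ∑ j, (v j) ^ 2 := by rw [mul_pow, h2, spec_eq]

lemma frob_mul_left {a b c : ℕ} (M : Matrix (Fin a) (Fin b) ℝ) (B : Matrix (Fin b) (Fin c) ℝ) :
    frob (M * B) ≤ spec M * frob B := by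
  unfold frob
  rw [show spec M * Real.sqrt (∑ i, ∑ j, B i j ^ 2)
      = Real.sqrt (spec M ^ 2 * ∑ i, ∑ j, B i j ^ 2) by
    rw [Real.sqrt_mul (by positivity), Real.sqrt_sq (spec_nonneg M)]]
  apply Real.sqrt_le_sqrt
  rw [Finset.sum_comm, Finset.sum_comm (s := Finset.univ) (t := Finset.univ) (f := fun i j => B i j ^ 2),
    Finset.mul_sum]
  apply Finset.sum_le_sum
  intro j _
  have := sum_sq_mulVec_le M (fun i => B i j)
  simpa [Matrix.mul_apply, Matrix.mulVec, dotProduct] using this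

lemma frob_mul_right {a b c : ℕ} (B : Matrix (Fin a) (Fin b) ℝ) (M : Matrix (Fin b) (Fin c) ℝ) :
    frob (B * M) ≤ frob B * spec M := by
  have : frob (B * M) = frob (Mᵀ * Bᵀ) := by rw [← Matrix.transpose_mul, frob_transpose]
  rw [this]
  calc frob (Mᵀ * Bᵀ) ≤ spec Mᵀ * frob Bᵀ := frob_mul_left _ _
    _ = frob B * spec M := by rw [spec_transpose, frob_transpose, mul_comm]

lemma frob_map_sub_le {a b : ℕ} (f : ℝ → ℝ) (hf : LipschitzWith 1 f)
    (M N : Matrix (Fin a) (Fin b) ℝ) :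
    frob (M.map f - N.map f) ≤ frob (M - N) := by
  unfold frob
  apply Real.sqrt_le_sqrt
  apply Finset.sum_le_sum; intro i _
  apply Finset.sum_le_sum; intro j _
  have h := hf.dist_le_mul (M i j) (N i j)
  rw [Real.dist_eq, Real.dist_eq, NNReal.coe_one, one_mul] at h
  simp only [Matrix.sub_apply, Matrix.map_apply]
  calc (f (M i j) - f (N i j)) ^ 2 = |f (M i j) - f (N i j)| ^ 2 := (sq_abs _).symm
    _ ≤ |M i j - N i j| ^ 2 := pow_le_pow_left₀ (abs_nonneg _) h 2
    _ = (M i j - N i j) ^ 2 := sq_abs _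

lemma frob_map_le {a b : ℕ} (f : ℝ → ℝ) (hf : LipschitzWith 1 f) (hf0 : f 0 = 0)
    (M : Matrix (Fin a) (Fin b) ℝ) : frob (M.map f) ≤ frob M := by
  have h := frob_map_sub_le f hf M 0
  simpa [Matrix.map_zero, hf0] using h


lemma gcn_frob_le {n : ℕ} (d : ℕ → ℕ) (φ : ℕ → ℝ → ℝ)
    (W : (ℓ : ℕ) → Matrix (Fin (d ℓ)) (Fin (d (ℓ + 1))) ℝ)
    (hφ : ∀ ℓ, LipschitzWith 1 (φ ℓ)) (hφ0 : ∀ ℓ, φ ℓ 0 = 0)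
    (A : Matrix (Fin n) (Fin n) ℝ) (hA : spec A ≤ 1)
    (X : Matrix (Fin n) (Fin (d 0)) ℝ) (ℓ : ℕ) :
    frob (gcn d φ A W X ℓ) ≤ (∏ k ∈ Finset.range ℓ, spec (W k)) * frob X := by
  induction ℓ with
  | zero => simp [gcn]
  | succ ℓ IH =>
    have wnn : 0 ≤ spec (W ℓ) := spec_nonneg _
    calc frob (gcn d φ A W X (ℓ + 1))
        ≤ frob (A * gcn d φ A W X ℓ * W ℓ) := frob_map_le _ (hφ _) (hφ0 _) _
      _ ≤ frob (A * gcn d φ A W X ℓ) * spec (W ℓ) := frob_mul_right _ _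
      _ ≤ (spec A * frob (gcn d φ A W X ℓ)) * spec (W ℓ) :=
          mul_le_mul_of_nonneg_right (frob_mul_left _ _) wnn
      _ ≤ frob (gcn d φ A W X ℓ) * spec (W ℓ) :=
          mul_le_mul_of_nonneg_right (mul_le_of_le_one_left (frob_nonneg _) hA) wnn
      _ ≤ ((∏ k ∈ Finset.range ℓ, spec (W k)) * frob X) * spec (W ℓ) :=
          mul_le_mul_of_nonneg_right IH wnn
      _ = (∏ k ∈ Finset.range (ℓ + 1), spec (W k)) * frob X := by
          rw [Finset.prod_range_succ]; ring

lemma gcn_diff_le {n : ℕ} (d : ℕ → ℕ) (φ : ℕ → ℝ → ℝ)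
    (W : (ℓ : ℕ) → Matrix (Fin (d ℓ)) (Fin (d (ℓ + 1))) ℝ)
    (hφ : ∀ ℓ, LipschitzWith 1 (φ ℓ)) (hφ0 : ∀ ℓ, φ ℓ 0 = 0)
    (A A' : Matrix (Fin n) (Fin n) ℝ) (hA : spec A ≤ 1) (hA' : spec A' ≤ 1)
    (ε : ℝ) (hε : 0 ≤ ε) (hAA' : spec (A - A') ≤ ε)
    (X : Matrix (Fin n) (Fin (d 0)) ℝ) (ℓ : ℕ) :
    frob (gcn d φ A' W X ℓ - gcn d φ A W X ℓ) ≤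
      (ℓ : ℝ) * (∏ k ∈ Finset.range ℓ, spec (W k)) * ε * frob X := by
  induction ℓ with
  | zero => simp [gcn, frob]
  | succ ℓ IH =>
    set H' := gcn d φ A' W X ℓ with hH'
    set H := gcn d φ A W X ℓ with hH
    have wnn : 0 ≤ spec (W ℓ) := spec_nonneg _
    have hHb : frob H ≤ (∏ k ∈ Finset.range ℓ, spec (W k)) * frob X :=
      gcn_frob_le d φ W hφ hφ0 A hA X ℓ
    have hAA'' : spec (A' - A) ≤ ε := by rw [spec_sub_comm]; exact hAA'
    have key : A' * H' * W ℓ - A * H * W ℓ =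
        A' * (H' - H) * W ℓ + (A' - A) * H * W ℓ := by
      simp only [Matrix.mul_sub, Matrix.sub_mul]
      abel
    have b1 : frob (A' * (H' - H) * W ℓ) ≤
        ((ℓ : ℝ) * (∏ k ∈ Finset.range ℓ, spec (W k)) * ε * frob X) * spec (W ℓ) := by
      calc frob (A' * (H' - H) * W ℓ)
          ≤ frob (A' * (H' - H)) * spec (W ℓ) := frob_mul_right _ _
        _ ≤ (spec A' * frob (H' - H)) * spec (W ℓ) :=
            mul_le_mul_of_nonneg_right (frob_mul_left _ _) wnn
        _ ≤ frob (H' - H) * spec (W ℓ) :=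
            mul_le_mul_of_nonneg_right (mul_le_of_le_one_left (frob_nonneg _) hA') wnn
        _ ≤ _ := mul_le_mul_of_nonneg_right IH wnn
    have b2 : frob ((A' - A) * H * W ℓ) ≤
        (ε * ((∏ k ∈ Finset.range ℓ, spec (W k)) * frob X)) * spec (W ℓ) := by
      calc frob ((A' - A) * H * W ℓ)
          ≤ frob ((A' - A) * H) * spec (W ℓ) := frob_mul_right _ _
        _ ≤ (spec (A' - A) * frob H) * spec (W ℓ) :=
            mul_le_mul_of_nonneg_right (frob_mul_left _ _) wnn
        _ ≤ (ε * ((∏ k ∈ Finset.range ℓ, spec (W k)) * frob X)) * spec (W ℓ) :=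
            mul_le_mul_of_nonneg_right
              (mul_le_mul hAA'' hHb (frob_nonneg _) hε) wnn
    calc frob (gcn d φ A' W X (ℓ + 1) - gcn d φ A W X (ℓ + 1))
        ≤ frob (A' * H' * W ℓ - A * H * W ℓ) := frob_map_sub_le _ (hφ _) _ _
      _ = frob (A' * (H' - H) * W ℓ + (A' - A) * H * W ℓ) := by rw [key]
      _ ≤ frob (A' * (H' - H) * W ℓ) + frob ((A' - A) * H * W ℓ) := frob_add_le _ _
      _ ≤ ((ℓ : ℝ) * (∏ k ∈ Finset.range ℓ, spec (W k)) * ε * frob X) * spec (W ℓ) +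
          (ε * ((∏ k ∈ Finset.range ℓ, spec (W k)) * frob X)) * spec (W ℓ) :=
            add_le_add b1 b2
      _ = ((ℓ + 1 : ℕ) : ℝ) * (∏ k ∈ Finset.range (ℓ + 1), spec (W k)) * ε * frob X := by
          rw [Finset.prod_range_succ]; push_cast; ring

/-- Theorem 2 (probabilistic / expected-robustness form, structural attacks): if the law
`μ` of the perturbed graph-shift matrix is supported in
`{Ã' : ‖Ã'‖₂ ≤ 1 ∧ ‖Ã − Ã'‖₂ ≤ ε}`, then the probability that the output of an
`L`-layer GCN moves by more than `σ` in Frobenius norm is at most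
`(∏ ℓ, ‖W⁽ˡ⁾‖₂) · ‖X‖_F · ε · (1 + L · ∏ ℓ, ‖W⁽ˡ⁾‖₂) / σ`. -/
theorem gcn_expected_robustness_structural_attack
    {n : ℕ} (L : ℕ) (d : ℕ → ℕ) (φ : ℕ → ℝ → ℝ)
    (W : (ℓ : ℕ) → Matrix (Fin (d ℓ)) (Fin (d (ℓ + 1))) ℝ)
    (hφ : ∀ ℓ, LipschitzWith 1 (φ ℓ)) (hφ0 : ∀ ℓ, φ ℓ 0 = 0)
    (hW : ∀ ℓ < L, 1 ≤ spec (W ℓ))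
    (A : Matrix (Fin n) (Fin n) ℝ) (hA : spec A ≤ 1)
    (X : Matrix (Fin n) (Fin (d 0)) ℝ)
    (ε : ℝ) (hε : 0 ≤ ε) (σ : ℝ) (hσ : 0 < σ)
    (μ : Measure (Matrix (Fin n) (Fin n) ℝ)) [IsProbabilityMeasure μ]
    (hsupp : ∀ᵐ A' ∂μ, spec A' ≤ 1 ∧ spec (A - A') ≤ ε) :
    μ {A' | σ < frob (gcn d φ A' W X L - gcn d φ A W X L)} ≤
      ENNReal.ofReal
        ((∏ ℓ ∈ Finset.range L, spec (W ℓ)) * frob X * ε *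
          (1 + (L : ℝ) * ∏ ℓ ∈ Finset.range L, spec (W ℓ)) / σ) := by
  set P := ∏ ℓ ∈ Finset.range L, spec (W ℓ) with hPdef
  have hP1 : 1 ≤ P := by
    rw [hPdef, show (1 : ℝ) = ∏ ℓ ∈ Finset.range L, (1 : ℝ) by simp]
    refine Finset.prod_le_prod (fun i _ => zero_le_one) (fun i hi => hW i (Finset.mem_range.mp hi))
  have hP0 : 0 ≤ P := le_trans zero_le_one hP1
  have hx : 0 ≤ frob X := frob_nonneg X
  set B := P * frob X * ε * (1 + (L : ℝ) * P) with hBdef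
  have hdetB : (L : ℝ) * P * ε * frob X ≤ B := by
    have hL : 0 ≤ (L : ℝ) := Nat.cast_nonneg L
    nlinarith [mul_nonneg (mul_nonneg hL hP0) (mul_nonneg hε hx),
      mul_nonneg hε hx, mul_nonneg hP0 (mul_nonneg hε hx)]
  by_cases hcase : B ≤ σ
  · have hae : ∀ᵐ A' ∂μ, frob (gcn d φ A' W X L - gcn d φ A W X L) ≤ σ := by
      filter_upwards [hsupp] with A' hA'
      calc frob (gcn d φ A' W X L - gcn d φ A W X L)
          ≤ (L : ℝ) * P * ε * frob X :=
            gcn_diff_le d φ W hφ hφ0 A A' hA hA'.1 ε hε hA'.2 X L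
        _ ≤ B := hdetB
        _ ≤ σ := hcase
    have hset : {A' | σ < frob (gcn d φ A' W X L - gcn d φ A W X L)} =
        {A' | ¬ frob (gcn d φ A' W X L - gcn d φ A W X L) ≤ σ} := by
      ext A'; simp [not_le]
    rw [hset, MeasureTheory.ae_iff.mp hae]
    exact zero_le
  · push_neg at hcase
    calc μ {A' | σ < frob (gcn d φ A' W X L - gcn d φ A W X L)}
        ≤ μ Set.univ := measure_mono (Set.subset_univ _)
      _ = 1 := measure_univ
      _ ≤ ENNReal.ofReal (B / σ) := by
          rw [ENNReal.one_le_ofReal, one_le_div hσ]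
          exact le_of_lt hcase
end
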